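/- For any positive real Q ≥ 1 and positive integer q ≤ Q, the sum ∑_{k ≤ Q/q} 1/φ(kq) is O(log(2Q/q)/φ(q)), with an absolute implied constant. That is, there is an absolute constant c > 0 such that ∑_{1 ≤ k ≤ Q/q} 1/φ(kq) ≤ c · log(2Q/q)/φ(q). -/

import Mathlib

open Finset

private lemma tel_prod : ∀ n : ℕ, 1 ≤ n →
    ∏ k ∈ Icc 2 n, (1 - 1/(k:ℝ)^2) = ((n:ℝ)+1)/(2*n) := by
  intro n hn
  induction n with
  | zero => omega
  | succ m ih =>
    rcases Nat.eq_or_lt_of_le hn with h | h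
    · have : m = 0 := by omega
      subst this; norm_num
    · have hm : 1 ≤ m := by omega
      rw [← Finset.insert_Icc_right_eq_Icc_add_one (by omega), Finset.prod_insert (by simp),
        ih hm]
      have hm0 : (m:ℝ) ≠ 0 := by positivity
      have hm1 : (m:ℝ) + 1 ≠ 0 := by positivity
      push_cast
      field_simp
      ring

private lemma factor_nonneg {k : ℕ} (hk : 2 ≤ k) : (0:ℝ) ≤ 1 - 1/(k:ℝ)^2 := by
  have hk2 : (2:ℝ) ≤ (k:ℝ) := by exact_mod_cast hk
  have h1 : (1:ℝ) ≤ (k:ℝ)^2 := by nlinarith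
  have : 1/(k:ℝ)^2 ≤ 1 := by rw [div_le_one (by nlinarith)]; exact h1
  linarith

private lemma prod_pf_nonneg (n : ℕ) :
    (0:ℝ) ≤ ∏ p ∈ n.primeFactors, (1 - 1/(p:ℝ)^2) :=
  Finset.prod_nonneg fun p hp =>
    factor_nonneg (Nat.prime_of_mem_primeFactors hp).two_le

private lemma prod_primeFactors_ge (n : ℕ) (hn : 1 ≤ n) :
    (1:ℝ)/2 ≤ ∏ p ∈ n.primeFactors, (1 - 1/(p:ℝ)^2) := by
  have hsub : n.primeFactors ⊆ Icc 2 n := fun p hp =>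
    Finset.mem_Icc.mpr ⟨(Nat.prime_of_mem_primeFactors hp).two_le,
      Nat.le_of_mem_primeFactors hp⟩
  have hle : ∏ k ∈ Icc 2 n, (1 - 1/(k:ℝ)^2) ≤ ∏ p ∈ n.primeFactors, (1 - 1/(p:ℝ)^2) := by
    rw [← Finset.prod_sdiff hsub]
    have h1 : ∏ k ∈ (Icc 2 n) \ n.primeFactors, (1 - 1/(k:ℝ)^2) ≤ 1 :=
      Finset.prod_le_one
        (fun k hk => factor_nonneg (Finset.mem_Icc.mp (Finset.mem_sdiff.mp hk).1).1)
        (fun k hk => by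
          have h2 : 2 ≤ k := (Finset.mem_Icc.mp (Finset.mem_sdiff.mp hk).1).1
          have : (0:ℝ) < 1/(k:ℝ)^2 := by positivity
          linarith)
    calc (∏ k ∈ (Icc 2 n) \ n.primeFactors, (1 - 1/(k:ℝ)^2)) *
            ∏ p ∈ n.primeFactors, (1 - 1/(p:ℝ)^2)
        ≤ 1 * ∏ p ∈ n.primeFactors, (1 - 1/(p:ℝ)^2) :=
          mul_le_mul_of_nonneg_right h1 (prod_pf_nonneg n)
      _ = _ := one_mul _
  refine le_trans ?_ hle
  rw [tel_prod n hn]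
  have hn0 : (0:ℝ) < (n:ℝ) := by exact_mod_cast hn
  rw [div_le_div_iff₀ (by norm_num) (by linarith)]
  linarith

/-- key multiplicative inequality:  n² ∏_{p|n} (1-1/p²) ≤ φ(n) σ(n). -/
private lemma key_ineq : ∀ n : ℕ, 1 ≤ n →
    (∏ p ∈ n.primeFactors, (1 - 1/(p:ℝ)^2)) * (n:ℝ)^2
      ≤ (Nat.totient n : ℝ) * (∑ d ∈ n.divisors, (d:ℝ)) := by
  intro n
  induction n using Nat.recOnPosPrimePosCoprime with
  | zero => omega
  | one => intro _; simp
  | prime_pow p k hp hk =>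
    intro _
    have hp' : p.Prime := hp
    rw [Nat.primeFactors_prime_pow (by omega) hp, Finset.prod_singleton]
    obtain ⟨j, rfl⟩ : ∃ j, k = j + 1 := ⟨k - 1, by omega⟩
    rw [Nat.totient_prime_pow_succ hp', Nat.sum_divisors_prime_pow hp']
    have hp2 : (2:ℝ) ≤ (p:ℝ) := by exact_mod_cast hp'.two_le
    have hne : (p:ℝ) - 1 ≠ 0 := by linarith
    have hgeom : ∑ x ∈ range (j + 1 + 1), ((p:ℝ) ^ x)
        = ((p:ℝ) ^ (j + 2) - 1) / ((p:ℝ) - 1) := by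
      rw [geom_sum_eq (by linarith)]
    push_cast [hgeom]
    rw [Nat.cast_sub hp'.one_le, Nat.cast_one]
    have hR : (p:ℝ) ^ j * ((p:ℝ) - 1) * (((p:ℝ) ^ (j + 2) - 1) / ((p:ℝ) - 1))
        = (p:ℝ)^(2*j+2) - (p:ℝ)^j := by
      field_simp
      ring
    rw [hR]
    have hL : (1 - 1/(p:ℝ)^2) * ((p:ℝ) ^ (j+1))^2
        = (p:ℝ)^(2*j+2) - (p:ℝ)^(2*j) := by
      have hp0 : (p:ℝ) ≠ 0 := by linarith
      field_simp
      ring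
    rw [hL]
    have : (p:ℝ)^j ≤ (p:ℝ)^(2*j) := pow_le_pow_right₀ (by linarith) (by omega)
    linarith
  | coprime a b ha hb hab iha ihb =>
    intro _
    have IA := iha (by omega)
    have IB := ihb (by omega)
    have hsum0 : (((∑ d ∈ (a*b).divisors, d : ℕ)) : ℝ)
        = (((∑ d ∈ a.divisors, d : ℕ)) : ℝ) * (((∑ d ∈ b.divisors, d : ℕ)) : ℝ) := by
      exact_mod_cast congrArg (fun t : ℕ => (t : ℝ)) hab.sum_divisors_mul
    have hsum : (∑ d ∈ (a*b).divisors, (d:ℝ))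
        = (∑ d ∈ a.divisors, (d:ℝ)) * ∑ d ∈ b.divisors, (d:ℝ) := by
      push_cast at hsum0
      exact hsum0
    rw [hab.primeFactors_mul, Finset.prod_union hab.disjoint_primeFactors,
      Nat.totient_mul hab, hsum]
    have hPA := prod_pf_nonneg a
    have hPB := prod_pf_nonneg b
    have hA2 : (0:ℝ) ≤ (a:ℝ)^2 := by positivity
    have hB2 : (0:ℝ) ≤ (b:ℝ)^2 := by positivity
    push_cast
    calc (∏ p ∈ a.primeFactors, (1 - 1/(p:ℝ)^2)) *
            (∏ p ∈ b.primeFactors, (1 - 1/(p:ℝ)^2)) * ((a:ℝ)*(b:ℝ))^2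
        = ((∏ p ∈ a.primeFactors, (1 - 1/(p:ℝ)^2)) * (a:ℝ)^2) *
          ((∏ p ∈ b.primeFactors, (1 - 1/(p:ℝ)^2)) * (b:ℝ)^2) := by ring
      _ ≤ ((Nat.totient a : ℝ) * (∑ d ∈ a.divisors, (d:ℝ))) *
          ((Nat.totient b : ℝ) * (∑ d ∈ b.divisors, (d:ℝ))) :=
          mul_le_mul IA IB (mul_nonneg hPB hB2) (le_trans (mul_nonneg hPA hA2) IA)
      _ = ((Nat.totient a : ℝ) * (Nat.totient b : ℝ)) *
          ((∑ d ∈ a.divisors, (d:ℝ)) * (∑ d ∈ b.divisors, (d:ℝ))) := by ring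

private lemma inv_totient_le (n : ℕ) (hn : 1 ≤ n) :
    (1:ℝ)/(Nat.totient n) ≤ 2 * ((∑ d ∈ n.divisors, (d:ℝ)) / (n:ℝ)^2) := by
  have h1 := key_ineq n hn
  have h2 := prod_primeFactors_ge n hn
  have hn0 : (0:ℝ) < (n:ℝ) := by exact_mod_cast hn
  have hn2 : (0:ℝ) < (n:ℝ)^2 := by positivity
  have hφ : (0:ℝ) < (Nat.totient n : ℝ) := by
    exact_mod_cast Nat.totient_pos.mpr (by omega)
  have h3 : (1:ℝ)/2 * (n:ℝ)^2 ≤ (Nat.totient n : ℝ) * (∑ d ∈ n.divisors, (d:ℝ)) :=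
    le_trans (mul_le_mul_of_nonneg_right h2 (le_of_lt hn2)) h1
  rw [mul_div_assoc'] at *
  rw [div_le_div_iff₀ hφ hn2]
  nlinarith [h3]

private lemma sum_sq_inv_le : ∀ N : ℕ, 1 ≤ N →
    ∑ m ∈ Icc 1 N, (1:ℝ)/(m:ℝ)^2 ≤ 2 - 1/(N:ℝ) := by
  intro N hN
  induction N with
  | zero => omega
  | succ M ih =>
    rcases Nat.eq_or_lt_of_le hN with h | h
    · have : M = 0 := by omega
      subst this; norm_num
    · have hM : 1 ≤ M := by omega
      rw [← Finset.insert_Icc_right_eq_Icc_add_one (by omega), Finset.sum_insert (by simp)]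
      have hM0 : (0:ℝ) < (M:ℝ) := by exact_mod_cast hM
      have key : (1:ℝ)/((M:ℝ)+1)^2 ≤ 1/(M:ℝ) - 1/((M:ℝ)+1) := by
        rw [div_sub_div _ _ (ne_of_gt hM0) (by positivity)]
        rw [div_le_div_iff₀ (by positivity) (by positivity)]
        ring_nf
        nlinarith
      have := ih hM
      push_cast
      push_cast at this key
      linarith

private lemma harmonic_bound (N : ℕ) :
    ∑ k ∈ Icc 1 N, (1:ℝ)/(k:ℝ) ≤ 1 + Real.log N := by
  have h := harmonic_le_one_add_log N
  have e : ((harmonic N : ℚ) : ℝ) = ∑ k ∈ Icc 1 N, (1:ℝ)/(k:ℝ) := by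
    rw [harmonic_eq_sum_Icc]
    push_cast
    simp [one_div]
  rw [e] at h
  exact h

private lemma div_sum_eq (n : ℕ) (hn : 1 ≤ n) :
    (∑ d ∈ n.divisors, (d:ℝ)) / (n:ℝ)^2 = ∑ m ∈ n.divisors, 1/((n:ℝ)*m) := by
  rw [Finset.sum_div, ← Nat.sum_div_divisors n (fun d => (d:ℝ) / (n:ℝ)^2)]
  apply Finset.sum_congr rfl
  intro m hm
  obtain ⟨hmd, hn0⟩ := Nat.mem_divisors.mp hm
  have hm1 : 1 ≤ m := Nat.pos_of_mem_divisors hm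
  have hmr0 : (0:ℝ) < (m:ℝ) := by exact_mod_cast hm1
  have hcast : ((n / m : ℕ) : ℝ) = (n:ℝ)/(m:ℝ) := Nat.cast_div hmd hmr0.ne'
  rw [hcast]
  have hnr : (0:ℝ) < (n:ℝ) := by exact_mod_cast hn
  have hmr : (0:ℝ) < (m:ℝ) := by exact_mod_cast hm1
  field_simp

private lemma swap_sum (N : ℕ) :
    ∑ n ∈ Icc 1 N, ∑ m ∈ n.divisors, (1:ℝ)/((n:ℝ)*m)
      = ∑ m ∈ Icc 1 N, ∑ k ∈ Icc 1 (N/m), (1:ℝ)/((m:ℝ)^2*k) := by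
  rw [Finset.sum_sigma', Finset.sum_sigma']
  apply Finset.sum_nbij' (i := fun x => (⟨x.2, x.1/x.2⟩ : Σ _ : ℕ, ℕ))
    (j := fun y => (⟨y.1*y.2, y.1⟩ : Σ _ : ℕ, ℕ))
  · rintro ⟨n, m⟩ hx
    rw [Finset.mem_sigma] at hx ⊢
    obtain ⟨hn, hm⟩ := hx
    rw [Finset.mem_Icc] at hn
    obtain ⟨hmd, hn0⟩ := Nat.mem_divisors.mp hm
    have hm1 : 1 ≤ m := Nat.pos_of_mem_divisors hm
    constructor
    · exact Finset.mem_Icc.mpr ⟨hm1, le_trans (Nat.le_of_dvd (by omega) hmd) hn.2⟩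
    · refine Finset.mem_Icc.mpr ⟨?_, Nat.div_le_div_right hn.2⟩
      exact (Nat.one_le_div_iff hm1).mpr (Nat.le_of_dvd (by omega) hmd)
  · rintro ⟨m, k⟩ hy
    rw [Finset.mem_sigma] at hy ⊢
    obtain ⟨hm, hk⟩ := hy
    rw [Finset.mem_Icc] at hm hk
    constructor
    · refine Finset.mem_Icc.mpr ⟨Nat.mul_pos hm.1 hk.1, ?_⟩
      calc m * k ≤ m * (N / m) := Nat.mul_le_mul_left m hk.2
        _ ≤ N := Nat.mul_div_le N m
    · exact Nat.mem_divisors.mpr ⟨Dvd.intro k rfl, (Nat.mul_pos hm.1 hk.1).ne'⟩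
  · rintro ⟨n, m⟩ hx
    rw [Finset.mem_sigma] at hx
    obtain ⟨hmd, _⟩ := Nat.mem_divisors.mp hx.2
    have : m * (n / m) = n := Nat.mul_div_cancel' hmd
    simp [this]
  · rintro ⟨m, k⟩ hy
    rw [Finset.mem_sigma] at hy
    have hm1 : 1 ≤ m := (Finset.mem_Icc.mp hy.1).1
    have : m * k / m = k := Nat.mul_div_cancel_left k (by omega)
    simp [this]
  · rintro ⟨n, m⟩ hx
    rw [Finset.mem_sigma] at hx
    obtain ⟨hmd, hn0⟩ := Nat.mem_divisors.mp hx.2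
    have hm1 : 1 ≤ m := Nat.pos_of_mem_divisors hx.2
    have hn1 : 1 ≤ n := (Finset.mem_Icc.mp hx.1).1
    have hmr : (0:ℝ) < (m:ℝ) := by exact_mod_cast hm1
    have hnr : (0:ℝ) < (n:ℝ) := by
      have := Nat.pos_of_ne_zero hn0
      exact_mod_cast this
    simp only
    have hcast : ((n / m : ℕ) : ℝ) = (n:ℝ)/(m:ℝ) := Nat.cast_div hmd hmr.ne'
    rw [hcast]
    rw [div_eq_div_iff (by positivity) (by positivity)]
    field_simp

private lemma sum_inv_totient (N : ℕ) (hN : 1 ≤ N) :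
    ∑ n ∈ Icc 1 N, (1:ℝ)/(Nat.totient n) ≤ 4 * (1 + Real.log N) := by
  have hlogN : 0 ≤ Real.log N := Real.log_nonneg (by exact_mod_cast hN)
  have step1 : ∑ n ∈ Icc 1 N, (1:ℝ)/(Nat.totient n)
      ≤ ∑ n ∈ Icc 1 N, 2 * ((∑ d ∈ n.divisors, (d:ℝ)) / (n:ℝ)^2) :=
    Finset.sum_le_sum fun n hn => inv_totient_le n (Finset.mem_Icc.mp hn).1
  have step2 : ∑ n ∈ Icc 1 N, 2 * ((∑ d ∈ n.divisors, (d:ℝ)) / (n:ℝ)^2)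
      = 2 * ∑ m ∈ Icc 1 N, ∑ k ∈ Icc 1 (N/m), (1:ℝ)/((m:ℝ)^2*k) := by
    rw [← Finset.mul_sum, ← swap_sum]
    congr 1
    exact Finset.sum_congr rfl fun n hn => div_sum_eq n (Finset.mem_Icc.mp hn).1
  have step3 : ∀ m ∈ Icc 1 N, ∑ k ∈ Icc 1 (N/m), (1:ℝ)/((m:ℝ)^2*k)
      ≤ (1/(m:ℝ)^2) * (1 + Real.log N) := by
    intro m hm
    have hm1 : 1 ≤ m := (Finset.mem_Icc.mp hm).1
    have hmr : (0:ℝ) < (m:ℝ) := by exact_mod_cast hm1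
    have e : ∑ k ∈ Icc 1 (N/m), (1:ℝ)/((m:ℝ)^2*k)
        = (1/(m:ℝ)^2) * ∑ k ∈ Icc 1 (N/m), (1:ℝ)/(k:ℝ) := by
      rw [Finset.mul_sum]
      exact Finset.sum_congr rfl fun k _ => by field_simp
    rw [e]
    refine mul_le_mul_of_nonneg_left ?_ (by positivity)
    calc ∑ k ∈ Icc 1 (N/m), (1:ℝ)/(k:ℝ)
        ≤ ∑ k ∈ Icc 1 N, (1:ℝ)/(k:ℝ) :=
          Finset.sum_le_sum_of_subset_of_nonneg
            (Finset.Icc_subset_Icc_right (Nat.div_le_self N m))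
            (fun k _ _ => by positivity)
      _ ≤ 1 + Real.log N := harmonic_bound N
  have hNr : (0:ℝ) < (N:ℝ) := by exact_mod_cast hN
  calc ∑ n ∈ Icc 1 N, (1:ℝ)/(Nat.totient n)
      ≤ 2 * ∑ m ∈ Icc 1 N, ∑ k ∈ Icc 1 (N/m), (1:ℝ)/((m:ℝ)^2*k) := step2 ▸ step1
    _ ≤ 2 * ∑ m ∈ Icc 1 N, (1/(m:ℝ)^2) * (1 + Real.log N) :=
        mul_le_mul_of_nonneg_left (Finset.sum_le_sum step3) (by norm_num)
    _ = 2 * (1 + Real.log N) * ∑ m ∈ Icc 1 N, 1/(m:ℝ)^2 := by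
        rw [← Finset.sum_mul]; ring
    _ ≤ 2 * (1 + Real.log N) * 2 := by
        refine mul_le_mul_of_nonneg_left ?_ (by positivity)
        have h1 := sum_sq_inv_le N hN
        have h2 : (0:ℝ) < 1/(N:ℝ) := by positivity
        linarith
    _ = 4 * (1 + Real.log N) := by ring

/-- There is an absolute constant `c > 0` such that for every real `Q ≥ 1` and every
positive integer `q ≤ Q`, `∑_{1 ≤ k ≤ Q/q} 1/φ(kq) ≤ c · log(2Q/q)/φ(q)`. -/
theorem stmt_2 :
    ∃ c : ℝ, 0 < c ∧ ∀ (Q : ℝ) (q : ℕ), 1 ≤ Q → 0 < q → (q : ℝ) ≤ Q →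
      ∑ k ∈ Finset.Icc 1 ⌊Q / (q : ℝ)⌋₊, (1 : ℝ) / (Nat.totient (k * q))
        ≤ c * Real.log (2 * Q / q) / (Nat.totient q) := by
  refine ⟨10, by norm_num, ?_⟩
  intro Q q hQ hq hqQ
  set N := ⌊Q / (q:ℝ)⌋₊ with hNdef
  have hqr : (0:ℝ) < (q:ℝ) := by exact_mod_cast hq
  have hx1 : (1:ℝ) ≤ Q / q := (one_le_div hqr).mpr hqQ
  have hN1 : 1 ≤ N := Nat.le_floor (by exact_mod_cast hx1)
  have hφq : (0:ℝ) < (Nat.totient q : ℝ) := by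
    exact_mod_cast Nat.totient_pos.mpr hq
  -- termwise bound
  have hterm : ∀ k ∈ Icc 1 N, (1:ℝ)/(Nat.totient (k*q))
      ≤ (1/(Nat.totient q : ℝ)) * (1/(Nat.totient k : ℝ)) := by
    intro k hk
    have hk1 : 1 ≤ k := (Finset.mem_Icc.mp hk).1
    have hφk : (0:ℝ) < (Nat.totient k : ℝ) := by
      exact_mod_cast Nat.totient_pos.mpr (by omega)
    have hsm : (Nat.totient k * Nat.totient q : ℕ) ≤ Nat.totient (k*q) :=
      Nat.totient_super_multiplicative k q
    have hpos : (0:ℝ) < ((Nat.totient k : ℝ) * (Nat.totient q : ℝ)) := by positivity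
    have h1 : (1:ℝ)/(Nat.totient (k*q))
        ≤ 1/((Nat.totient k : ℝ) * (Nat.totient q : ℝ)) := by
      apply one_div_le_one_div_of_le hpos
      exact_mod_cast hsm
    calc (1:ℝ)/(Nat.totient (k*q)) ≤ 1/((Nat.totient k : ℝ) * (Nat.totient q : ℝ)) := h1
      _ = (1/(Nat.totient q : ℝ)) * (1/(Nat.totient k : ℝ)) := by
          rw [one_div, one_div, one_div, mul_inv, mul_comm]
  have hsum1 : ∑ k ∈ Icc 1 N, (1:ℝ)/(Nat.totient (k*q))
      ≤ (1/(Nat.totient q : ℝ)) * ∑ k ∈ Icc 1 N, (1:ℝ)/(Nat.totient k) := by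
    rw [Finset.mul_sum]
    exact Finset.sum_le_sum hterm
  have hsum2 := sum_inv_totient N hN1
  -- log bounds
  have hNr : (0:ℝ) < (N:ℝ) := by exact_mod_cast hN1
  have hNle : (N:ℝ) ≤ Q / q := Nat.floor_le (by positivity)
  have hlogN : Real.log N ≤ Real.log (Q/q) := Real.log_le_log hNr hNle
  have hlogQq : 0 ≤ Real.log (Q/q) := Real.log_nonneg hx1
  have hlog2 : (2:ℝ)/3 ≤ Real.log 2 := by
    have := Real.log_two_gt_d9
    linarith
  have hL : Real.log (2 * Q / q) = Real.log 2 + Real.log (Q/q) := by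
    rw [show (2:ℝ) * Q / q = 2 * (Q/q) by ring]
    rw [Real.log_mul (by norm_num) (by positivity)]
  have hmain : 4 * (1 + Real.log N) ≤ 10 * Real.log (2 * Q / q) := by
    rw [hL]
    have h1 : (1:ℝ) ≤ (3/2) * Real.log 2 := by linarith
    nlinarith [hlog2, hlogQq, hlogN]
  calc ∑ k ∈ Icc 1 N, (1:ℝ)/(Nat.totient (k*q))
      ≤ (1/(Nat.totient q : ℝ)) * ∑ k ∈ Icc 1 N, (1:ℝ)/(Nat.totient k) := hsum1
    _ ≤ (1/(Nat.totient q : ℝ)) * (4 * (1 + Real.log N)) :=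
        mul_le_mul_of_nonneg_left hsum2 (by positivity)
    _ ≤ (1/(Nat.totient q : ℝ)) * (10 * Real.log (2 * Q / q)) :=
        mul_le_mul_of_nonneg_left hmain (by positivity)
    _ = 10 * Real.log (2 * Q / q) / (Nat.totient q) := by
        field_simp
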